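/- Let S be a finite state set, s₀ ∈ S, A, B ⊆ S, k ∈ ℕ, P a transition matrix over S, ε ≥ 0, and T ⊆ S × S. Then there exists a worst-case attack: a matrix P* ∈ PS_{ε,T}(P) such that u^{P*}_k s₀ ≤ u^{P'}_k s₀ for all P' ∈ PS_{ε,T}(P). -/
import Mathlib


attribute [local instance] Classical.propDecidable

/-- A transition matrix over a finite state set `S`. -/
def IsTransMat {S : Type*} [Fintype S] (P : S → S → ℝ) : Prop :=
  (∀ s s' : S, 0 ≤ P s s' ∧ P s s' ≤ 1) ∧ (∀ s : S, ∑ s' : S, P s s' = 1)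

/-- Entrywise max distance between two matrices. -/
noncomputable def maxDist {S : Type*} [Fintype S] (P P' : S → S → ℝ) : ℝ :=
  sSup (Set.range fun p : S × S => |P p.1 p.2 - P' p.1 p.2|)

/-- The ε,max-bounded selected-transitions perturbation set. -/
def PertSet {S : Type*} [Fintype S] (P : S → S → ℝ) (ε : ℝ) (T : Set (S × S)) :
    Set (S → S → ℝ) :=
  {P' | IsTransMat P' ∧ maxDist P P' ≤ ε ∧ ∀ s s' : S, (s, s') ∉ T → P' s s' = P s s'}

/-- Bounded-until satisfaction probabilities `u^P_k`. -/
noncomputable def u {S : Type*} [Fintype S] (A B : Set S) (P : S → S → ℝ) : ℕ → S → ℝ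
  | 0 => fun s => if s ∈ B then 1 else 0
  | k + 1 => fun s =>
      if s ∈ B then 1
      else if s ∈ A then ∑ s' : S, P s s' * u A B P k s' else 0

/-- Adversarial robustness of `P` w.r.t. a perturbation set `PS`,
the property `A U^{≤k} B`, initial state `s₀`, and `δ`. -/
def Robust {S : Type*} [Fintype S] (P : S → S → ℝ) (PS : Set (S → S → ℝ))
    (A B : Set S) (k : ℕ) (s₀ : S) (δ : ℝ) : Prop :=
  ∀ P' ∈ PS, u A B P' k s₀ ≥ u A B P k s₀ - δ

lemma cont_eval {S : Type*} [Fintype S] (s s' : S) :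
    Continuous fun P' : S → S → ℝ => P' s s' :=
  (continuous_apply s').comp (continuous_apply s)

lemma cont_u {S : Type*} [Fintype S] (A B : Set S) :
    ∀ (k : ℕ) (s : S), Continuous fun P' : S → S → ℝ => u A B P' k s := by
  intro k
  induction k with
  | zero => intro s; simp only [u]; exact continuous_const
  | succ k ih =>
    intro s
    simp only [u]
    by_cases hB : s ∈ B
    · simp only [hB, if_true]; exact continuous_const
    · by_cases hA : s ∈ A
      · simp only [hB, hA, if_false, if_true]
        exact continuous_finset_sum _ fun s' _ => (cont_eval s s').mul (ih s')
      · simp only [hB, hA, if_false]; exact continuous_const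

lemma maxDist_le_iff {S : Type*} [Fintype S] (P P' : S → S → ℝ) {ε : ℝ} (hε : 0 ≤ ε) :
    maxDist P P' ≤ ε ↔ ∀ p : S × S, |P p.1 p.2 - P' p.1 p.2| ≤ ε := by
  unfold maxDist
  rcases isEmpty_or_nonempty (S × S) with h | h
  · simp [Set.range_eq_empty, Real.sSup_empty, hε]
  · rw [csSup_le_iff (Set.finite_range _).bddAbove (Set.range_nonempty _)]
    constructor
    · intro h' p; exact h' _ ⟨p, rfl⟩
    · rintro h' b ⟨p, rfl⟩; exact h' p

/-- a worst-case attack exists in the ε,max-bounded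
selected-transitions perturbation set. -/
theorem stmt_10 {S : Type*} [Fintype S] (s₀ : S) (A B : Set S) (k : ℕ)
    (P : S → S → ℝ) (hP : IsTransMat P) (ε : ℝ) (hε : 0 ≤ ε) (T : Set (S × S)) :
    ∃ Pstar ∈ PertSet P ε T, ∀ P' ∈ PertSet P ε T,
      u A B Pstar k s₀ ≤ u A B P' k s₀ := by
  -- PertSet is nonempty
  have hPmem : P ∈ PertSet P ε T := by
    refine ⟨hP, ?_, fun _ _ _ => rfl⟩
    rw [maxDist_le_iff P P hε]
    intro p; simpa using hε
  -- PertSet is closed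
  have hclosed : IsClosed (PertSet P ε T) := by
    have heq : PertSet P ε T =
        ((⋂ s : S, ⋂ s' : S, {P' : S → S → ℝ | 0 ≤ P' s s'} ∩ {P' | P' s s' ≤ 1}) ∩
          ⋂ s : S, {P' : S → S → ℝ | ∑ s' : S, P' s s' = 1}) ∩
        ((⋂ p : S × S, {P' : S → S → ℝ | |P p.1 p.2 - P' p.1 p.2| ≤ ε}) ∩
          ⋂ s : S, ⋂ s' : S, ⋂ _ : (s, s') ∉ T, {P' : S → S → ℝ | P' s s' = P s s'}) := by
      ext P'
      simp only [PertSet, IsTransMat, Set.mem_setOf_eq, Set.mem_inter_iff, Set.mem_iInter,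
        maxDist_le_iff P P' hε, forall_and]
    rw [heq]
    refine IsClosed.inter (IsClosed.inter ?_ ?_) (IsClosed.inter ?_ ?_)
    · exact isClosed_iInter fun s => isClosed_iInter fun s' =>
        (isClosed_le continuous_const (cont_eval s s')).inter
          (isClosed_le (cont_eval s s') continuous_const)
    · exact isClosed_iInter fun s =>
        isClosed_eq (continuous_finset_sum _ fun s' _ => cont_eval s s') continuous_const
    · exact isClosed_iInter fun p =>
        isClosed_le ((continuous_const.sub (cont_eval p.1 p.2)).abs) continuous_const
    · exact isClosed_iInter fun s => isClosed_iInter fun s' => isClosed_iInter fun _ =>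
        isClosed_eq (cont_eval s s') continuous_const
  -- PertSet is contained in a compact box
  have hsub : PertSet P ε T ⊆
      Set.pi Set.univ fun _ : S => Set.pi Set.univ fun _ : S => Set.Icc (0 : ℝ) 1 := by
    intro P' hP' s _ s' _
    exact ⟨(hP'.1.1 s s').1, (hP'.1.1 s s').2⟩
  have hcomp : IsCompact (PertSet P ε T) :=
    IsCompact.of_isClosed_subset
      (isCompact_univ_pi fun _ => isCompact_univ_pi fun _ => isCompact_Icc) hclosed hsub
  obtain ⟨Pstar, hmem, hmin⟩ :=
    hcomp.exists_isMinOn ⟨P, hPmem⟩ ((cont_u A B k s₀).continuousOn)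
  exact ⟨Pstar, hmem, fun P' hP' => hmin hP'⟩
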